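/- For each α = 1,2,3, on T³ one has ε_α(p) − ε_α(0) = −Σ_{s∈Z³} ε̂_α(s)·[1 − cos(s⁽¹⁾p⁽¹⁾)cos(s⁽²⁾p⁽²⁾)cos(s⁽³⁾p⁽³⁾)], and this quantity is strictly positive for every p ∈ T³ with p ≠ 0. -/

import Mathlib

open MeasureTheory Filter Metric Asymptotics
open scoped Real ENNReal InnerProductSpace

noncomputable section

abbrev V3 := Fin 3 → ℝ
abbrev Z3 := Fin 3 → ℤ

/-- The fundamental domain `(-π, π]³` representing the torus `𝕋³ = (-π, π]³`. -/
def cube : Set V3 := Set.univ.pi fun _ => Set.Ioc (-π) π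

/-- `|s| = |s⁽¹⁾| + |s⁽²⁾| + |s⁽³⁾|` on `ℤ³`. -/
def znorm (s : Z3) : ℤ := ∑ j, |s j|

/-- The Fourier series `∑_{s ∈ ℤ³} ê(s) e^{i(p,s)}`. -/
def epsC (e : Z3 → ℝ) (p : V3) : ℂ :=
  ∑' s : Z3, (e s : ℂ) * Complex.exp (Complex.I * ((∑ j, p j * (s j : ℝ) : ℝ) : ℂ))

/-- The dispersion function `ε(p)` (real-valued since `ê` is even). -/
def eps (e : Z3 → ℝ) (p : V3) : ℝ := (epsC e p).re

/-- The effective mass `m = 3 (−∑_s (s₁² + s₂² + s₃²) ê(s))⁻¹`. -/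
def mass (e : Z3 → ℝ) : ℝ :=
  3 * (-(∑' s : Z3, (∑ j, ((s j : ℝ)) ^ 2) * e s))⁻¹

/-- Hypothesis 2.1 of the paper, on the dispersion functions `ê`. -/
structure DispHyp (e : Z3 → ℝ) : Prop where
  sym : ∀ s t : Z3, znorm s = znorm t → e s = e t
  decay : ∃ a C : ℝ, 0 < a ∧ 0 < C ∧ ∀ s : Z3, |e s| ≤ C * Real.exp (-a * (znorm s : ℝ))
  neg : ∀ s : Z3, znorm s = 1 → e s < 0
  nonpos : ∀ s : Z3, 1 < znorm s → e s ≤ 0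

/-- `lcoef e₁ e₂ = m₂ / (m₁ + m₂)`, i.e. `l_{12}` in the paper's notation. -/
def lcoef (e1 e2 : Z3 → ℝ) : ℝ := mass e2 / (mass e1 + mass e2)

/-- `E_k^{(α)}(q) = ε_β(l_{γβ} k + q) + ε_γ(l_{βγ} k − q)` where `eb = ε̂_β`, `ec = ε̂_γ`. -/
def Ek (eb ec : Z3 → ℝ) (k q : V3) : ℝ :=
  eps eb (lcoef ec eb • k + q) + eps ec (lcoef eb ec • k - q)

/-! ### Auxiliary lemmas -/

lemma sumexp_int {a : ℝ} (ha : 0 < a) : Summable (fun n : ℤ => Real.exp (-a * |(n : ℝ)|)) := by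
  have hgeo : Summable (fun n : ℕ => Real.exp (-a) ^ n) :=
    summable_geometric_of_lt_one (Real.exp_nonneg _) (Real.exp_lt_one_iff.mpr (by linarith))
  have h1 : Summable (fun n : ℕ => Real.exp (-a * |((n : ℤ) : ℝ)|)) := by
    refine hgeo.congr fun n => ?_
    rw [← Real.exp_nat_mul]
    congr 1
    push_cast
    rw [abs_of_nonneg (by positivity)]
    ring
  refine Summable.of_nat_of_neg h1 ?_
  refine h1.congr fun n => ?_
  congr 2
  push_cast
  rw [abs_neg]

def myE : Z3 ≃ ℤ × ℤ × ℤ where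
  toFun s := (s 0, s 1, s 2)
  invFun x := ![x.1, x.2.1, x.2.2]
  left_inv s := by funext i; fin_cases i <;> rfl
  right_inv x := rfl

lemma sumexp3 {a : ℝ} (ha : 0 < a) :
    Summable (fun s : Z3 => Real.exp (-a * ((znorm s : ℤ) : ℝ))) := by
  have h1 := sumexp_int ha
  have h2 : Summable (fun x : ℤ × ℤ => Real.exp (-a * |(x.1 : ℝ)|) * Real.exp (-a * |(x.2 : ℝ)|)) :=
    h1.mul_of_nonneg h1 (fun _ => Real.exp_nonneg _) (fun _ => Real.exp_nonneg _)
  have h3 : Summable (fun x : ℤ × ℤ × ℤ =>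
      Real.exp (-a * |(x.1 : ℝ)|) *
        (Real.exp (-a * |(x.2.1 : ℝ)|) * Real.exp (-a * |(x.2.2 : ℝ)|))) := by
    have := h1.mul_of_nonneg (h2.congr fun x => rfl) (fun _ => Real.exp_nonneg _)
      (fun x => mul_nonneg (Real.exp_nonneg _) (Real.exp_nonneg _))
    exact this.congr fun x => rfl
  have := (myE.summable_iff (f := fun x : ℤ × ℤ × ℤ =>
      Real.exp (-a * |(x.1 : ℝ)|) *
        (Real.exp (-a * |(x.2.1 : ℝ)|) * Real.exp (-a * |(x.2.2 : ℝ)|)))).mpr h3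
  refine this.congr fun s => ?_
  show Real.exp (-a * |((s 0 : ℤ) : ℝ)|) *
      (Real.exp (-a * |((s 1 : ℤ) : ℝ)|) * Real.exp (-a * |((s 2 : ℤ) : ℝ)|))
      = Real.exp (-a * ((znorm s : ℤ) : ℝ))
  rw [← Real.exp_add, ← Real.exp_add]
  congr 1
  have h4 : ((znorm s : ℤ) : ℝ) = |((s 0 : ℤ) : ℝ)| + |((s 1 : ℤ) : ℝ)| + |((s 2 : ℤ) : ℝ)| := by
    simp only [znorm, Fin.sum_univ_three]
    push_cast
    ring
  rw [h4]; ring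

/-- Flip the `j`-th coordinate. -/
def flipFun (j : Fin 3) (s : Z3) : Z3 := fun i => if i = j then -(s i) else s i

lemma flip_invol (j : Fin 3) : Function.Involutive (flipFun j) := by
  intro s; funext i
  simp only [flipFun]
  by_cases h : i = j <;> simp [h]

def flipE (j : Fin 3) : Equiv.Perm Z3 := Function.Involutive.toPerm _ (flip_invol j)

lemma znorm_flip (j : Fin 3) (s : Z3) : znorm (flipFun j s) = znorm s := by
  simp only [znorm, flipFun]
  refine Finset.sum_congr rfl fun i _ => ?_
  by_cases h : i = j <;> simp [h]

lemma normIexp (x : ℝ) : ‖Complex.exp (Complex.I * (x : ℂ))‖ = 1 := by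
  rw [Complex.norm_exp]
  simp [Complex.mul_re]

lemma cos_avg (x y : ℝ) :
    (Complex.exp (Complex.I * ((x + y : ℝ) : ℂ)) +
      Complex.exp (Complex.I * ((-x + y : ℝ) : ℂ))) / 2 =
    (Real.cos x : ℂ) * Complex.exp (Complex.I * (y : ℂ)) := by
  rw [Complex.ofReal_cos, Complex.cos,
    show Complex.I * ((x + y : ℝ) : ℂ) = (x : ℂ) * Complex.I + Complex.I * (y : ℂ) by
      push_cast; ring,
    show Complex.I * ((-x + y : ℝ) : ℂ) = (-(x : ℂ)) * Complex.I + Complex.I * (y : ℂ) by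
      push_cast; ring,
    Complex.exp_add, Complex.exp_add]
  ring

lemma cos_avg0 (x : ℝ) :
    (Complex.exp (Complex.I * ((x : ℝ) : ℂ)) +
      Complex.exp (Complex.I * ((-x : ℝ) : ℂ))) / 2 = (Real.cos x : ℂ) := by
  have h := cos_avg x 0
  simp only [add_zero, Complex.ofReal_zero, mul_zero, Complex.exp_zero, mul_one] at h
  exact h

lemma coslt {x : ℝ} (hx : x ∈ Set.Ioc (-π) π) (hx0 : x ≠ 0) : Real.cos x < 1 := by
  refine lt_of_le_of_ne (Real.cos_le_one x) fun h => ?_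
  obtain ⟨n, hn⟩ := (Real.cos_eq_one_iff x).mp h
  have hπ := Real.pi_pos
  rcases lt_trichotomy n 0 with hneg | rfl | hpos
  · have : (n : ℝ) ≤ -1 := by exact_mod_cast (by omega : n ≤ -1)
    have := hx.1
    nlinarith
  · simp at hn; exact hx0 hn.symm
  · have : (1 : ℝ) ≤ (n : ℝ) := by exact_mod_cast (by omega : 1 ≤ n)
    have := hx.2
    nlinarith

/-- `ε(p) − ε(0) = −∑_s ê(s)·[1 − cos(s⁽¹⁾p⁽¹⁾) cos(s⁽²⁾p⁽²⁾) cos(s⁽³⁾p⁽³⁾)]`,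
and this quantity is strictly positive for every `p ∈ 𝕋³` with `p ≠ 0`. -/
theorem statement2 (e : Z3 → ℝ) (he : DispHyp e) :
    (∀ p : V3, epsC e p - epsC e 0 =
      -((∑' s : Z3, e s * (1 - Real.cos ((s 0 : ℝ) * p 0) * Real.cos ((s 1 : ℝ) * p 1) *
          Real.cos ((s 2 : ℝ) * p 2)) : ℝ) : ℂ)) ∧
    (∀ p ∈ cube, p ≠ 0 →
      0 < -(∑' s : Z3, e s * (1 - Real.cos ((s 0 : ℝ) * p 0) * Real.cos ((s 1 : ℝ) * p 1) *
          Real.cos ((s 2 : ℝ) * p 2)))) := by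
  obtain ⟨a, C, ha, hC, hbound⟩ := he.decay
  have hsumexp := sumexp3 ha
  -- complex summability
  have keyC : ∀ f : Z3 → ℂ, (∀ s, ‖f s‖ ≤ 1) → Summable (fun s => (e s : ℂ) * f s) := by
    intro f hf
    refine Summable.of_norm_bounded (g := fun s => C * Real.exp (-a * ((znorm s : ℤ) : ℝ)))
      (hsumexp.mul_left C) fun s => ?_
    rw [norm_mul, Complex.norm_real, Real.norm_eq_abs]
    calc |e s| * ‖f s‖ ≤ |e s| * 1 := by
          exact mul_le_mul_of_nonneg_left (hf s) (abs_nonneg _)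
      _ = |e s| := mul_one _
      _ ≤ C * Real.exp (-a * ((znorm s : ℤ) : ℝ)) := hbound s
  -- real summability
  have keyR : ∀ (M : ℝ) (g : Z3 → ℝ), (∀ s, |g s| ≤ M) → Summable (fun s => e s * g s) := by
    intro M g hg
    refine Summable.of_norm_bounded (g := fun s => (C * M) * Real.exp (-a * ((znorm s : ℤ) : ℝ)))
      (hsumexp.mul_left _) fun s => ?_
    rw [Real.norm_eq_abs, abs_mul]
    have hM : 0 ≤ M := le_trans (abs_nonneg _) (hg s)
    calc |e s| * |g s| ≤ (C * Real.exp (-a * ((znorm s : ℤ) : ℝ))) * M :=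
        mul_le_mul (hbound s) (hg s) (abs_nonneg _)
          (le_trans (abs_nonneg _) (hbound s))
      _ = (C * M) * Real.exp (-a * ((znorm s : ℤ) : ℝ)) := by ring
  -- averaging over a coordinate flip
  have avg : ∀ (j : Fin 3) (f : Z3 → ℂ), (∀ s, ‖f s‖ ≤ 1) →
      ∑' s, (e s : ℂ) * f s = ∑' s, (e s : ℂ) * ((f s + f (flipFun j s)) / 2) := by
    intro j f hf
    have hflip : ∑' s, (e s : ℂ) * f (flipFun j s) = ∑' s, (e s : ℂ) * f s := by
      have h := (flipE j).tsum_eq (fun s => (e s : ℂ) * f s)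
      rw [← h]
      refine tsum_congr fun s => ?_
      have : e (flipFun j s) = e s := he.sym _ _ (znorm_flip j s)
      show (e s : ℂ) * f (flipFun j s) = (e (flipFun j s) : ℂ) * f (flipFun j s)
      rw [this]
    have hs1 : Summable (fun s => (e s : ℂ) * f s) := keyC f hf
    have hs2 : Summable (fun s => (e s : ℂ) * f (flipFun j s)) := keyC _ fun s => hf _
    have hrw : ∀ s : Z3, (e s : ℂ) * ((f s + f (flipFun j s)) / 2) =
        ((e s : ℂ) * f s + (e s : ℂ) * f (flipFun j s)) * (2 : ℂ)⁻¹ := fun s => by ring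
    rw [tsum_congr hrw, tsum_mul_right, Summable.tsum_add hs1 hs2, hflip]
    ring
  -- the main identity for a fixed p
  have main : ∀ p : V3, epsC e p =
      ((∑' s : Z3, e s * (Real.cos ((s 0 : ℝ) * p 0) * Real.cos ((s 1 : ℝ) * p 1) *
        Real.cos ((s 2 : ℝ) * p 2)) : ℝ) : ℂ) := by
    intro p
    set f0 : Z3 → ℂ := fun s =>
      Complex.exp (Complex.I * ((∑ j, p j * (s j : ℝ) : ℝ) : ℂ)) with hf0
    set f1 : Z3 → ℂ := fun s => (Real.cos ((s 0 : ℝ) * p 0) : ℂ) *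
      Complex.exp (Complex.I * (((s 1 : ℝ) * p 1 + (s 2 : ℝ) * p 2 : ℝ) : ℂ)) with hf1
    set f2 : Z3 → ℂ := fun s => (Real.cos ((s 0 : ℝ) * p 0) : ℂ) *
      (Real.cos ((s 1 : ℝ) * p 1) : ℂ) *
      Complex.exp (Complex.I * (((s 2 : ℝ) * p 2 : ℝ) : ℂ)) with hf2
    set f3 : Z3 → ℂ := fun s => (Real.cos ((s 0 : ℝ) * p 0) : ℂ) *
      (Real.cos ((s 1 : ℝ) * p 1) : ℂ) * (Real.cos ((s 2 : ℝ) * p 2) : ℂ) with hf3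
    have hb0 : ∀ s, ‖f0 s‖ ≤ 1 := fun s => le_of_eq (normIexp _)
    have hb1 : ∀ s, ‖f1 s‖ ≤ 1 := by
      intro s
      rw [hf1, norm_mul, normIexp, mul_one, Complex.norm_real, Real.norm_eq_abs]
      exact Real.abs_cos_le_one _
    have hb2 : ∀ s, ‖f2 s‖ ≤ 1 := by
      intro s
      rw [hf2, norm_mul, norm_mul, normIexp, mul_one, Complex.norm_real, Complex.norm_real,
        Real.norm_eq_abs, Real.norm_eq_abs]
      exact mul_le_one₀ (Real.abs_cos_le_one _) (abs_nonneg _) (Real.abs_cos_le_one _)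
    have step1 : ∑' s, (e s : ℂ) * f0 s = ∑' s, (e s : ℂ) * f1 s := by
      rw [avg 0 f0 hb0]
      refine tsum_congr fun s => ?_
      congr 1
      have e1 : (∑ j, p j * (s j : ℝ)) =
          ((s 0 : ℝ) * p 0) + ((s 1 : ℝ) * p 1 + (s 2 : ℝ) * p 2) := by
        rw [Fin.sum_univ_three]; ring
      have e2 : (∑ j, p j * ((flipFun 0 s) j : ℝ)) =
          -((s 0 : ℝ) * p 0) + ((s 1 : ℝ) * p 1 + (s 2 : ℝ) * p 2) := by
        rw [Fin.sum_univ_three]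
        simp only [flipFun]
        norm_num
        push_cast
        ring
      rw [hf0, hf1]
      simp only
      rw [e1, e2, cos_avg]
    have step2 : ∑' s, (e s : ℂ) * f1 s = ∑' s, (e s : ℂ) * f2 s := by
      rw [avg 1 f1 hb1]
      refine tsum_congr fun s => ?_
      congr 1
      have e1 : ((s 1 : ℝ) * p 1 + (s 2 : ℝ) * p 2) =
          ((s 1 : ℝ) * p 1) + ((s 2 : ℝ) * p 2) := rfl
      have hflip0 : (flipFun 1 s) 0 = s 0 := by simp [flipFun]
      have hflip1 : ((flipFun 1 s) 1 : ℝ) = -(s 1 : ℝ) := by simp [flipFun]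
      have hflip2 : (flipFun 1 s) 2 = s 2 := by simp [flipFun]
      rw [hf1, hf2]
      simp only [hflip0, hflip1, hflip2]
      have key := cos_avg ((s 1 : ℝ) * p 1) ((s 2 : ℝ) * p 2)
      have harg : (-(s 1 : ℝ) * p 1 + (s 2 : ℝ) * p 2) =
          (-((s 1 : ℝ) * p 1) + (s 2 : ℝ) * p 2) := by ring
      rw [harg]
      linear_combination (Real.cos ((s 0 : ℝ) * p 0) : ℂ) * key
    have step3 : ∑' s, (e s : ℂ) * f2 s = ∑' s, (e s : ℂ) * f3 s := by
      rw [avg 2 f2 hb2]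
      refine tsum_congr fun s => ?_
      congr 1
      have hflip0 : (flipFun 2 s) 0 = s 0 := by simp [flipFun]
      have hflip1 : (flipFun 2 s) 1 = s 1 := by simp [flipFun]
      have hflip2 : ((flipFun 2 s) 2 : ℝ) = -(s 2 : ℝ) := by simp [flipFun]
      rw [hf2, hf3]
      simp only [hflip0, hflip1, hflip2]
      have key := cos_avg0 ((s 2 : ℝ) * p 2)
      have harg : (-(s 2 : ℝ) * p 2) = (-((s 2 : ℝ) * p 2)) := by ring
      rw [harg]
      linear_combination ((Real.cos ((s 0 : ℝ) * p 0) : ℂ) *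
        (Real.cos ((s 1 : ℝ) * p 1) : ℂ)) * key
    have hcast : ((∑' s : Z3, e s * (Real.cos ((s 0 : ℝ) * p 0) * Real.cos ((s 1 : ℝ) * p 1) *
        Real.cos ((s 2 : ℝ) * p 2)) : ℝ) : ℂ) = ∑' s, (e s : ℂ) * f3 s := by
      rw [Complex.ofReal_tsum]
      refine tsum_congr fun s => ?_
      rw [hf3]
      push_cast
      ring
    rw [hcast, ← step3, ← step2, ← step1]
    rfl
  have main0 : epsC e 0 = ((∑' s : Z3, e s : ℝ) : ℂ) := by
    rw [epsC, Complex.ofReal_tsum]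
    refine tsum_congr fun s => ?_
    have : (∑ j, (0 : V3) j * (s j : ℝ)) = 0 := by simp
    rw [this]
    simp
  -- summabilities for the subtraction step
  have hsum3 : ∀ p : V3, Summable (fun s : Z3 => e s * (Real.cos ((s 0 : ℝ) * p 0) *
      Real.cos ((s 1 : ℝ) * p 1) * Real.cos ((s 2 : ℝ) * p 2))) := by
    intro p
    refine keyR 1 _ fun s => ?_
    rw [abs_mul, abs_mul]
    exact mul_le_one₀ (mul_le_one₀ (Real.abs_cos_le_one _) (abs_nonneg _)
      (Real.abs_cos_le_one _)) (abs_nonneg _) (Real.abs_cos_le_one _)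
  have hsum1 : Summable e := by
    have := keyR 1 (fun _ => 1) (fun s => by norm_num)
    simpa using this
  constructor
  · intro p
    rw [main p, main0, ← Complex.ofReal_sub, ← Complex.ofReal_neg]
    congr 1
    rw [← Summable.tsum_sub (hsum3 p) hsum1, ← tsum_neg]
    refine tsum_congr fun s => ?_
    ring
  · intro p hp hp0
    set PP : Z3 → ℝ := fun s => Real.cos ((s 0 : ℝ) * p 0) * Real.cos ((s 1 : ℝ) * p 1) *
      Real.cos ((s 2 : ℝ) * p 2) with hPP
    have habs : ∀ s, |PP s| ≤ 1 := by
      intro s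
      rw [hPP]
      simp only [abs_mul]
      exact mul_le_one₀ (mul_le_one₀ (Real.abs_cos_le_one _) (abs_nonneg _)
        (Real.abs_cos_le_one _)) (abs_nonneg _) (Real.abs_cos_le_one _)
    have hPle : ∀ s, PP s ≤ 1 := fun s => le_trans (le_abs_self _) (habs s)
    have hsumf : Summable (fun s : Z3 => e s * (1 - PP s)) := by
      refine keyR 2 _ fun s => ?_
      have h := abs_le.mp (habs s)
      rw [abs_le]
      constructor <;> linarith [h.1, h.2]
    have hg : Summable (fun s : Z3 => -(e s * (1 - PP s))) := hsumf.neg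
    -- nonnegativity of each term
    have hnn : ∀ s : Z3, 0 ≤ -(e s * (1 - PP s)) := by
      intro s
      rcases eq_or_lt_of_le (Finset.sum_nonneg fun i _ => abs_nonneg (s i) : (0:ℤ) ≤ znorm s) with h0 | h1
      · -- znorm s = 0 → s = 0 → PP s = 1
        have hz : ∀ j, s j = 0 := by
          intro j
          have := (Finset.sum_eq_zero_iff_of_nonneg
            (fun i _ => abs_nonneg (s i))).mp h0.symm j (Finset.mem_univ j)
          exact abs_eq_zero.mp this
        have : PP s = 1 := by
          rw [hPP]; simp [hz 0, hz 1, hz 2]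
        simp [this]
      · have hel : e s ≤ 0 := by
          rcases eq_or_lt_of_le (show (1:ℤ) ≤ znorm s from h1) with h | h
          · exact le_of_lt (he.neg s h.symm)
          · exact he.nonpos s h
        have : 0 ≤ 1 - PP s := by linarith [hPle s]
        nlinarith
    -- a strictly positive term
    obtain ⟨j, hj⟩ : ∃ j, p j ≠ 0 := Function.ne_iff.mp hp0
    have hpj : p j ∈ Set.Ioc (-π) π := hp j (Set.mem_univ j)
    have hcos : Real.cos (p j) < 1 := coslt hpj hj
    set s₀ : Z3 := fun i => if i = j then 1 else 0 with hs₀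
    have hzn : znorm s₀ = 1 := by
      rw [znorm, hs₀]
      simp only [apply_ite (abs : ℤ → ℤ), abs_one, abs_zero]
      simp [Finset.sum_ite_eq']
    have hes : e s₀ < 0 := he.neg s₀ hzn
    have hPs : PP s₀ = Real.cos (p j) := by
      rw [hPP, hs₀]
      fin_cases j <;> simp
    have hpos : 0 < -(e s₀ * (1 - PP s₀)) := by
      rw [hPs]
      nlinarith
    have := Summable.tsum_pos hg hnn s₀ hpos
    rwa [tsum_neg] at this

end
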